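/- Let a_1, a_2, a_3, a_4 be four points in ℝ² (the BSs), no three of which are collinear. Suppose that for every partition of {1,2,3,4} into two pairs {i,j} and {k,l}, the line through a_i and a_j is NOT perpendicular to the line through a_k and a_l. Then for any set X ⊆ ℝ² of K = 2 targets, no ghost configuration exists: every set X^G ⊆ ℝ² with |X^G| = 2 and D_m(X^G) = D_m(X) for m = 1,2,3,4 must equal X. -/

import Mathlib

noncomputable section

/-- The Euclidean plane ℝ². -/
abbrev Plane := EuclideanSpace ℝ (Fin 2)

/-- The range set of a BS located at `a` with respect to a target set `X`:
the set of distances from `a` to the points of `X`. -/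
def rangeSet (a : Plane) (X : Set Plane) : Set ℝ := (fun p => dist a p) '' X

lemma plane_ext {p q : Plane} (h0 : p 0 = q 0) (h1 : p 1 = q 1) : p = q := by
  ext i; fin_cases i <;> assumption

lemma perp_scalar {e0 e1 w0 w1 : ℝ} (he : e0 ≠ 0 ∨ e1 ≠ 0)
    (h : w0*e0 + w1*e1 = 0) : ∃ c, w0 = -(c*e1) ∧ w1 = c*e0 := by
  rcases he with h0 | h1
  · exact ⟨w1/e0, by field_simp; linarith, by field_simp⟩
  · exact ⟨-w0/e1, by field_simp, by field_simp; linarith⟩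

lemma collinear_of_det {p q r : Plane}
    (h : (q 0 - p 0) * (r 1 - p 1) = (q 1 - p 1) * (r 0 - p 0)) :
    Collinear ℝ ({p, q, r} : Set Plane) := by
  by_cases hq : q = p
  · subst hq
    have : ({q, q, r} : Set Plane) = {q, r} := by simp
    rw [this]; exact collinear_pair ℝ q r
  · have hne : q 0 - p 0 ≠ 0 ∨ q 1 - p 1 ≠ 0 := by
      by_contra hc
      push_neg at hc
      exact hq (plane_ext (by linarith [hc.1]) (by linarith [hc.2]))
    rw [collinear_iff_of_mem (Set.mem_insert p _)]
    refine ⟨q - p, ?_⟩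
    intro x hx
    have key : ∀ t : ℝ, x 0 - p 0 = t * (q 0 - p 0) → x 1 - p 1 = t * (q 1 - p 1) →
        ∃ t' : ℝ, x = t' • (q - p) +ᵥ p := by
      intro t h0 h1
      refine ⟨t, plane_ext ?_ ?_⟩ <;>
        simp only [vadd_eq_add, PiLp.add_apply, PiLp.smul_apply, PiLp.sub_apply, smul_eq_mul] <;>
        linarith
    rcases hx with rfl | rfl | rfl
    · exact key 0 (by ring) (by ring)
    · exact key 1 (by ring) (by ring)
    · rcases hne with h0 | h1
      · refine key ((x 0 - p 0)/(q 0 - p 0)) (by field_simp) ?_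
        field_simp
        linear_combination h
      · refine key ((x 1 - p 1)/(q 1 - p 1)) ?_ (by field_simp)
        field_simp
        linear_combination -h

lemma three_collinear {p q r : Plane} {e0 e1 : ℝ} (he : ¬(e0 = 0 ∧ e1 = 0))
    (hq : (q 0 - p 0)*e0 + (q 1 - p 1)*e1 = 0)
    (hr : (r 0 - p 0)*e0 + (r 1 - p 1)*e1 = 0) :
    Collinear ℝ ({p, q, r} : Set Plane) := by
  have he' : e0 ≠ 0 ∨ e1 ≠ 0 := by tauto
  obtain ⟨c, hc0, hc1⟩ := perp_scalar he' hq
  obtain ⟨d, hd0, hd1⟩ := perp_scalar he' hr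
  exact collinear_of_det (by rw [hc0, hc1, hd0, hd1]; ring)

lemma perp_perp {e0 e1 f0 f1 w0 w1 v0 v1 : ℝ} (he : ¬(e0=0∧e1=0)) (hf : ¬(f0=0∧f1=0))
    (hef : e0*f0 + e1*f1 = 0) (hw : w0*e0+w1*e1 = 0) (hv : v0*f0+v1*f1 = 0) :
    w0*v0 + w1*v1 = 0 := by
  have he' : e0 ≠ 0 ∨ e1 ≠ 0 := by tauto
  obtain ⟨c, hc0, hc1⟩ := perp_scalar he' hw
  obtain ⟨d, hd0, hd1⟩ := perp_scalar he' (by linarith : f0*e0 + f1*e1 = 0)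
  have hd : d ≠ 0 := by
    rintro rfl
    simp at hd0 hd1
    exact hf ⟨hd0, hd1⟩
  have : d * (v1*e0 - v0*e1) = 0 := by rw [hd0, hd1] at hv; linarith
  have h2 : v1*e0 - v0*e1 = 0 := by
    rcases mul_eq_zero.mp this with h | h
    · exact absurd h hd
    · exact h
  rw [hc0, hc1]; linear_combination c * h2

lemma pair_eq {α : Type*} {p q r s : α} (h : ({p, q} : Set α) = {r, s}) :
    (p = r ∧ q = s) ∨ (p = s ∧ q = r) := by
  have hp : p = r ∨ p = s := by have : p ∈ ({r,s} : Set α) := h ▸ (by simp); simpa using this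
  have hq : q = r ∨ q = s := by have : q ∈ ({r,s} : Set α) := h ▸ (by simp); simpa using this
  have hs : s = p ∨ s = q := by have : s ∈ ({p,q} : Set α) := h ▸ (by simp); simpa using this
  have hr : r = p ∨ r = q := by have : r ∈ ({p,q} : Set α) := h ▸ (by simp); simpa using this
  rcases hp with rfl | rfl <;> rcases hq with hq | hq <;> tauto

lemma dist_eq_iff' (b x y : Plane) : dist b x = dist b y ↔
    2*(b 0*(y 0 - x 0) + b 1*(y 1 - x 1)) = y 0^2 + y 1^2 - x 0^2 - x 1^2 := by
  rw [EuclideanSpace.dist_eq, EuclideanSpace.dist_eq,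
    Real.sqrt_inj (Finset.sum_nonneg fun i _ => sq_nonneg _) (Finset.sum_nonneg fun i _ => sq_nonneg _)]
  simp only [Real.dist_eq, sq_abs, Fin.sum_univ_two]
  constructor <;> intro h <;> linear_combination h

/-- **Lemma 1 (first part).** With `M = 4` BSs, no three of which are collinear,
if for every partition of the BSs into two pairs the line through one pair is not
perpendicular to the line through the other pair, then no ghost configuration
exists for any set of `K = 2` targets. -/
theorem no_ghost_of_no_perpendicular (a : Fin 4 → Plane)
    (hcol : ∀ i j k : Fin 4, i ≠ j → i ≠ k → j ≠ k →
      ¬ Collinear ℝ ({a i, a j, a k} : Set Plane))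
    (hperp : ∀ i j k l : Fin 4, ({i, j, k, l} : Finset (Fin 4)) = Finset.univ →
      (inner ℝ (a j - a i) (a l - a k) : ℝ) ≠ 0)
    (X : Set Plane) (hXfin : X.Finite) (hXcard : X.ncard = 2)
    (XG : Set Plane) (hGfin : XG.Finite) (hGcard : XG.ncard = 2)
    (hranges : ∀ m : Fin 4, rangeSet (a m) XG = rangeSet (a m) X) :
    XG = X := by
  obtain ⟨x1, x2, hx, rfl⟩ := Set.ncard_eq_two.mp hXcard
  obtain ⟨y1, y2, hy, rfl⟩ := Set.ncard_eq_two.mp hGcard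
  have hmatch : ∀ m, (dist (a m) y1 = dist (a m) x1 ∧ dist (a m) y2 = dist (a m) x2) ∨
      (dist (a m) y1 = dist (a m) x2 ∧ dist (a m) y2 = dist (a m) x1) := by
    intro m
    exact pair_eq (by simpa [rangeSet, Set.image_pair] using hranges m)
  have key : ∀ m,
      (2*(a m 0*(y1 0 - x1 0) + a m 1*(y1 1 - x1 1)) = y1 0^2 + y1 1^2 - x1 0^2 - x1 1^2 ∧
       2*(a m 0*(y2 0 - x2 0) + a m 1*(y2 1 - x2 1)) = y2 0^2 + y2 1^2 - x2 0^2 - x2 1^2) ∨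
      (2*(a m 0*(y1 0 - x2 0) + a m 1*(y1 1 - x2 1)) = y1 0^2 + y1 1^2 - x2 0^2 - x2 1^2 ∧
       2*(a m 0*(y2 0 - x1 0) + a m 1*(y2 1 - x1 1)) = y2 0^2 + y2 1^2 - x1 0^2 - x1 1^2) := by
    intro m
    rcases hmatch m with ⟨h1, h2⟩ | ⟨h1, h2⟩
    · exact Or.inl ⟨(dist_eq_iff' _ _ _).mp h1.symm, (dist_eq_iff' _ _ _).mp h2.symm⟩
    · exact Or.inr ⟨(dist_eq_iff' _ _ _).mp h1.symm, (dist_eq_iff' _ _ _).mp h2.symm⟩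
  -- sum identity, same in both branches
  have hS : ∀ m, 2*(a m 0*(y1 0 + y2 0 - x1 0 - x2 0) + a m 1*(y1 1 + y2 1 - x1 1 - x2 1)) =
      y1 0^2 + y1 1^2 + y2 0^2 + y2 1^2 - x1 0^2 - x1 1^2 - x2 0^2 - x2 1^2 := by
    intro m
    rcases key m with ⟨h1, h2⟩ | ⟨h1, h2⟩ <;> linear_combination h1 + h2
  have hs : y1 0 + y2 0 - x1 0 - x2 0 = 0 ∧ y1 1 + y2 1 - x1 1 - x2 1 = 0 := by
    by_contra hc
    exact hcol 0 1 2 (by decide) (by decide) (by decide)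
      (three_collinear hc (by linear_combination (hS 1 - hS 0)/2)
        (by linear_combination (hS 2 - hS 0)/2))
  obtain ⟨hs0, hs1⟩ := hs
  have hN : y1 0^2 + y1 1^2 + y2 0^2 + y2 1^2 - x1 0^2 - x1 1^2 - x2 0^2 - x2 1^2 = 0 := by
    linear_combination (2 * a 0 0) * hs0 + (2 * a 0 1) * hs1 - hS 0
  have hef : (y1 0 - x1 0)*(y1 0 - x2 0) + (y1 1 - x1 1)*(y1 1 - x2 1) = 0 := by
    linear_combination (1/2)*hN - (1/2)*(x1 0 + x2 0 - y1 0 + y2 0)*hs0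
      - (1/2)*(x1 1 + x2 1 - y1 1 + y2 1)*hs1
  by_cases hE : y1 0 - x1 0 = 0 ∧ y1 1 - x1 1 = 0
  · have h1 : y1 = x1 := plane_ext (by linarith [hE.1]) (by linarith [hE.2])
    have h2 : y2 = x2 := plane_ext (by linarith [hE.1]) (by linarith [hE.2])
    rw [h1, h2]
  by_cases hF : y1 0 - x2 0 = 0 ∧ y1 1 - x2 1 = 0
  · have h1 : y1 = x2 := plane_ext (by linarith [hF.1]) (by linarith [hF.2])
    have h2 : y2 = x1 := plane_ext (by linarith [hF.1]) (by linarith [hF.2])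
    rw [h1, h2, Set.pair_comm]
  -- contradiction case
  exfalso
  set P : Fin 4 → Prop := fun m =>
    2*(a m 0*(y1 0 - x1 0) + a m 1*(y1 1 - x1 1)) = y1 0^2 + y1 1^2 - x1 0^2 - x1 1^2 with hP
  set Q : Fin 4 → Prop := fun m =>
    2*(a m 0*(y1 0 - x2 0) + a m 1*(y1 1 - x2 1)) = y1 0^2 + y1 1^2 - x2 0^2 - x2 1^2 with hQ
  have hPQ : ∀ m, P m ∨ Q m := fun m => (key m).imp And.left And.left
  have cP : ∀ i j k : Fin 4, i ≠ j → i ≠ k → j ≠ k → P i → P j → P k → False := by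
    intro i j k hij hik hjk hi hj hk
    exact hcol i j k hij hik hjk
      (three_collinear hE (by simp only [hP] at hi hj; linear_combination (hj - hi)/2)
        (by simp only [hP] at hi hk; linear_combination (hk - hi)/2))
  have cQ : ∀ i j k : Fin 4, i ≠ j → i ≠ k → j ≠ k → Q i → Q j → Q k → False := by
    intro i j k hij hik hjk hi hj hk
    exact hcol i j k hij hik hjk
      (three_collinear hF (by simp only [hQ] at hi hj; linear_combination (hj - hi)/2)
        (by simp only [hQ] at hi hk; linear_combination (hk - hi)/2))
  have cPQ : ∀ i j k l : Fin 4, ({i, j, k, l} : Finset (Fin 4)) = Finset.univ →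
      P i → P j → Q k → Q l → False := by
    intro i j k l huniv hi hj hk hl
    apply hperp i j k l huniv
    have : (inner ℝ (a j - a i) (a l - a k) : ℝ) =
        (a j 0 - a i 0) * (a l 0 - a k 0) + (a j 1 - a i 1) * (a l 1 - a k 1) := by
      simp [PiLp.inner_apply, Fin.sum_univ_two]
      ring
    rw [this]
    simp only [hP] at hi hj
    simp only [hQ] at hk hl
    exact perp_perp hE hF hef (by linear_combination (hj - hi)/2) (by linear_combination (hl - hk)/2)
  rcases hPQ 0 with h0 | h0 <;> rcases hPQ 1 with h1 | h1 <;>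
    rcases hPQ 2 with h2 | h2 <;> rcases hPQ 3 with h3 | h3
  · exact cP 0 1 2 (by decide) (by decide) (by decide) h0 h1 h2
  · exact cP 0 1 2 (by decide) (by decide) (by decide) h0 h1 h2
  · exact cP 0 1 3 (by decide) (by decide) (by decide) h0 h1 h3
  · exact cPQ 0 1 2 3 (by decide) h0 h1 h2 h3
  · exact cP 0 2 3 (by decide) (by decide) (by decide) h0 h2 h3
  · exact cPQ 0 2 1 3 (by decide) h0 h2 h1 h3
  · exact cPQ 0 3 1 2 (by decide) h0 h3 h1 h2
  · exact cQ 1 2 3 (by decide) (by decide) (by decide) h1 h2 h3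
  · exact cP 1 2 3 (by decide) (by decide) (by decide) h1 h2 h3
  · exact cPQ 1 2 0 3 (by decide) h1 h2 h0 h3
  · exact cPQ 1 3 0 2 (by decide) h1 h3 h0 h2
  · exact cQ 0 2 3 (by decide) (by decide) (by decide) h0 h2 h3
  · exact cPQ 2 3 0 1 (by decide) h2 h3 h0 h1
  · exact cQ 0 1 3 (by decide) (by decide) (by decide) h0 h1 h3
  · exact cQ 0 1 2 (by decide) (by decide) (by decide) h0 h1 h2
  · exact cQ 0 1 2 (by decide) (by decide) (by decide) h0 h1 h2
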